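/- In the AHK setup on n ≥ 3 nodes, assume that E[Z₁₂] = 0 and E[Z₁₂²] < ∞, and define the Hájek projection terms W_l := Σ_{j≠l} E[Z_{lj} | σ(U_l)] + Σ_{i≠l} E[Z_{il} | σ(U_l)] for l = 1,…,n. Then W₁,…,W_n are mutually independent, and Var( Σ_{l=1}^n W_l ) = n(n−1)(n−2)·( E[Z₁₂Z₁₃] + E[Z₂₁Z₃₁] + 2·E[Z₁₂Z₃₁] ) + n(n−1)·( E[(E[Z₁₂ | σ(U₁)])²] + E[(E[Z₂₁ | σ(U₁)])²] + 2·E[ E[Z₁₂ | σ(U₁)] · E[Z₂₁ | σ(U₁)] ] ). -/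

import Mathlib

open MeasureTheory ProbabilityTheory

section Helpers

variable {Ω : Type*} {mΩ : MeasurableSpace Ω} {P : Measure Ω}

/-- Independence passes to an injectively reindexed family of smaller σ-algebras. -/
lemma iIndep_comp_of_le' {ι ι' : Type*} {m : ι → MeasurableSpace Ω}
    (h : iIndep m P) (g : ι' → ι) (hg : Function.Injective g)
    (m' : ι' → MeasurableSpace Ω) (hle : ∀ i, m' i ≤ m (g i)) : iIndep m' P := by
  classical
  rw [iIndep_iff] at h ⊢
  intro s f hf
  set F : ι → Set Ω := fun x => if hx : ∃ i ∈ s, g i = x then f hx.choose else Set.univ with hF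
  have h1 : ∀ i ∈ s, F (g i) = f i := by
    intro i hi
    have hx : ∃ j ∈ s, g j = g i := ⟨i, hi, rfl⟩
    rw [hF]; dsimp only; rw [dif_pos hx]
    have hc := hx.choose_spec
    rw [hg hc.2]
  have key := h (s.map ⟨g, hg⟩) (f := F) ?_
  · calc P (⋂ i ∈ s, f i)
        = P (⋂ x ∈ s.map ⟨g, hg⟩, F x) := by
          congr 1
          ext ω
          simp only [Set.mem_iInter, Finset.mem_map, Function.Embedding.coeFn_mk]
          constructor
          · rintro hω x ⟨i, hi, rfl⟩
            rw [h1 i hi]; exact hω i hi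
          · intro hω i hi
            have := hω (g i) ⟨i, hi, rfl⟩
            rwa [h1 i hi] at this
      _ = ∏ x ∈ s.map ⟨g, hg⟩, P (F x) := key
      _ = ∏ i ∈ s, P (f i) := by
          rw [Finset.prod_map]
          exact Finset.prod_congr rfl fun i hi => by
            simp only [Function.Embedding.coeFn_mk]; rw [h1 i hi]
  · intro x hx
    rw [Finset.mem_map] at hx
    obtain ⟨i, hi, rfl⟩ := hx
    simp only [Function.Embedding.coeFn_mk]
    rw [h1 i hi]
    exact hle i _ (hf i hi)

/-- The product of two `L²` real functions is integrable. -/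
lemma integrable_mul_of_memL2 {α : Type*} {mα : MeasurableSpace α} {μ : Measure α}
    {f g : α → ℝ} (hf : MemLp f 2 μ) (hg : MemLp g 2 μ) :
    Integrable (fun x => f x * g x) μ := by
  refine Integrable.mono' (((hf.integrable_sq.add hg.integrable_sq).const_mul (1/2 : ℝ)))
    (hf.aestronglyMeasurable.mul hg.aestronglyMeasurable)
    (Filter.Eventually.of_forall fun x => ?_)
  have h := sq_nonneg (|f x| - |g x|)
  have h2 : ‖f x * g x‖ = |f x| * |g x| := by rw [Real.norm_eq_abs, abs_mul]
  rw [h2]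
  simp only [Pi.add_apply]
  have hf2 : f x ^ 2 = |f x| ^ 2 := (sq_abs _).symm
  have hg2 : g x ^ 2 = |g x| ^ 2 := (sq_abs _).symm
  nlinarith [abs_nonneg (f x), abs_nonneg (g x)]

/-- Conditional expectation of `φ (X, Y)` given `σ(X)` when `X` and `Y` are independent. -/
lemma condexp_indepFun_integral {β γ : Type*} [IsProbabilityMeasure P]
    [mβ : MeasurableSpace β] [mγ : MeasurableSpace γ] {X : Ω → β} {Y : Ω → γ}
    (hX : Measurable X) (hY : Measurable Y) (hXY : IndepFun X Y P)
    (φ : β × γ → ℝ) (hφ : Measurable φ)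
    (hint : Integrable (fun ω => φ (X ω, Y ω)) P) :
    P[(fun ω => φ (X ω, Y ω)) | MeasurableSpace.comap X inferInstance]
      =ᵐ[P] fun ω => ∫ y, φ (X ω, y) ∂(P.map Y) := by
  have hm : MeasurableSpace.comap X inferInstance ≤ mΩ := hX.comap_le
  haveI : IsFiniteMeasure (P.trim hm) := isFiniteMeasure_trim hm
  haveI : IsProbabilityMeasure (P.map Y) := Measure.isProbabilityMeasure_map hY.aemeasurable
  haveI : IsProbabilityMeasure (P.map X) := Measure.isProbabilityMeasure_map hX.aemeasurable
  have hjoint : Measurable (fun ω => (X ω, Y ω)) := hX.prodMk hY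
  have hmap : P.map (fun ω => (X ω, Y ω)) = (P.map X).prod (P.map Y) :=
    (indepFun_iff_map_prod_eq_prod_map_map hX.aemeasurable hY.aemeasurable).mp hXY
  have hφint : Integrable φ ((P.map X).prod (P.map Y)) := by
    rw [← hmap]
    exact (integrable_map_measure hφ.aestronglyMeasurable hjoint.aemeasurable).mpr hint
  set g : β → ℝ := fun x => ∫ y, φ (x, y) ∂(P.map Y) with hgdef
  have hgsm : StronglyMeasurable g := hφ.stronglyMeasurable.integral_prod_right'
  have hXc : Measurable[MeasurableSpace.comap X inferInstance] X :=
    measurable_iff_comap_le.mpr le_rfl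
  have hgX_meas : Measurable[MeasurableSpace.comap X inferInstance] (fun ω => g (X ω)) :=
    hgsm.measurable.comp hXc
  have hgint : Integrable g (P.map X) := hφint.integral_prod_left
  have hgX_int : Integrable (fun ω => g (X ω)) P :=
    (integrable_map_measure hgsm.aestronglyMeasurable hX.aemeasurable).mp hgint
  refine (ae_eq_condExp_of_forall_setIntegral_eq hm hint
    (fun s _ _ => hgX_int.integrableOn) (fun s hs _ => ?_)
    ⟨fun ω => g (X ω), hgX_meas.stronglyMeasurable, Filter.EventuallyEq.rfl⟩).symm
  obtain ⟨A, hA, rfl⟩ := hs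
  have hpre : (fun ω => (X ω, Y ω)) ⁻¹' (A ×ˢ Set.univ) = X ⁻¹' A := by
    ext ω; simp
  calc ∫ ω in X ⁻¹' A, g (X ω) ∂P
      = ∫ x in A, g x ∂(P.map X) :=
        (setIntegral_map hA hgsm.aestronglyMeasurable hX.aemeasurable).symm
    _ = ∫ x in A, ∫ y, φ (x, y) ∂(P.map Y) ∂(P.map X) := rfl
    _ = ∫ z in A ×ˢ Set.univ, φ z ∂((P.map X).prod (P.map Y)) := by
        rw [setIntegral_prod _ hφint.integrableOn]
        simp [Measure.restrict_univ]
    _ = ∫ ω in X ⁻¹' A, φ (X ω, Y ω) ∂P := by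
        rw [← hmap, setIntegral_map (hA.prod MeasurableSet.univ) hφ.aestronglyMeasurable
          hjoint.aemeasurable, hpre]

end Helpers

section MoreHelpers

open MeasureTheory ProbabilityTheory

variable {Ω : Type*} {mΩ : MeasurableSpace Ω} {P : Measure Ω}

lemma comap_prodMk_le {β γ : Type*} [mβ : MeasurableSpace β] [mγ : MeasurableSpace γ]
    (f : Ω → β) (g : Ω → γ) :
    MeasurableSpace.comap (fun ω => (f ω, g ω)) inferInstance ≤
      MeasurableSpace.comap f mβ ⊔ MeasurableSpace.comap g mγ := by
  rw [show (inferInstance : MeasurableSpace (β × γ)) = mβ.comap Prod.fst ⊔ mγ.comap Prod.snd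
      from rfl, MeasurableSpace.comap_sup, MeasurableSpace.comap_comp, MeasurableSpace.comap_comp]
  exact le_rfl

lemma indepFun_of_comap_le {ι β γ : Type*} [mβ : MeasurableSpace β] [mγ : MeasurableSpace γ]
    {m : ι → MeasurableSpace Ω} (h : iIndep m P) (hM : ∀ i, m i ≤ mΩ)
    {Sset Tset : Set ι} (hST : Disjoint Sset Tset) {X : Ω → β} {Y : Ω → γ}
    (hX : MeasurableSpace.comap X mβ ≤ ⨆ i ∈ Sset, m i)
    (hY : MeasurableSpace.comap Y mγ ≤ ⨆ i ∈ Tset, m i) : IndepFun X Y P := by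
  have h1 := indep_iSup_of_disjoint hM h hST
  exact indep_of_indep_of_le_left (indep_of_indep_of_le_right h1 hY) hX

end MoreHelpers

open MeasureTheory ProbabilityTheory

/-- The Hájek projection terms of a mean-zero AHK dyadic sum are mutually independent,
and the variance of their sum is given by the exact formula below. -/
theorem dyadic_hajek_projection_variance
    {Ω S T : Type*} [MeasurableSpace Ω] [MeasurableSpace S] [MeasurableSpace T]
    (P : Measure Ω) [IsProbabilityMeasure P]
    {n : ℕ} (hn : 3 ≤ n)
    (U : Fin n → Ω → S)
    (V : {e : Sym2 (Fin n) // ¬ e.IsDiag} → Ω → T)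
    (hU : ∀ i, Measurable (U i)) (hV : ∀ e, Measurable (V e))
    (hUid : ∀ i j, IdentDistrib (U i) (U j) P P)
    (hVid : ∀ e e', IdentDistrib (V e) (V e') P P)
    (hindep : iIndep
      (Sum.elim (fun i => MeasurableSpace.comap (U i) inferInstance)
                (fun e => MeasurableSpace.comap (V e) inferInstance)
        : Fin n ⊕ {e : Sym2 (Fin n) // ¬ e.IsDiag} → MeasurableSpace Ω) P)
    (τ : S → S → T → ℝ)
    (hτ : Measurable fun q : S × S × T => τ q.1 q.2.1 q.2.2)
    (Z : Fin n → Fin n → Ω → ℝ)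
    (hZ : ∀ i j : Fin n, ∀ hij : i ≠ j,
      Z i j = fun ω => τ (U i ω) (U j ω)
        (V ⟨Sym2.mk i j, mt Sym2.mk_isDiag_iff.mp hij⟩ ω))
    (i0 i1 i2 : Fin n)
    (h0 : (i0 : ℕ) = 0) (h1 : (i1 : ℕ) = 1) (h2 : (i2 : ℕ) = 2)
    (hmean : ∫ ω, Z i0 i1 ω ∂P = 0)
    (hL2 : MemLp (Z i0 i1) 2 P)
    (W : Fin n → Ω → ℝ)
    (hW : ∀ l : Fin n, W l = fun ω =>
      (∑ j ∈ Finset.univ.erase l,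
        (P[Z l j | MeasurableSpace.comap (U l) inferInstance]) ω)
      + ∑ i ∈ Finset.univ.erase l,
        (P[Z i l | MeasurableSpace.comap (U l) inferInstance]) ω) :
    iIndepFun W P
    ∧ variance (fun ω => ∑ l : Fin n, W l ω) P
      = (n : ℝ) * ((n : ℝ) - 1) * ((n : ℝ) - 2) *
          ((∫ ω, Z i0 i1 ω * Z i0 i2 ω ∂P) + (∫ ω, Z i1 i0 ω * Z i2 i0 ω ∂P)
            + 2 * ∫ ω, Z i0 i1 ω * Z i2 i0 ω ∂P)
        + (n : ℝ) * ((n : ℝ) - 1) *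
          ((∫ ω, ((P[Z i0 i1 | MeasurableSpace.comap (U i0) inferInstance]) ω) ^ 2 ∂P)
            + (∫ ω, ((P[Z i1 i0 | MeasurableSpace.comap (U i0) inferInstance]) ω) ^ 2 ∂P)
            + 2 * ∫ ω, (P[Z i0 i1 | MeasurableSpace.comap (U i0) inferInstance]) ω *
                (P[Z i1 i0 | MeasurableSpace.comap (U i0) inferInstance]) ω ∂P) := by
  classical
  have h01 : i0 ≠ i1 := by intro h; rw [h, h1] at h0; omega
  have h02 : i0 ≠ i2 := by intro h; rw [h, h2] at h0; omega
  have h12 : i1 ≠ i2 := by intro h; rw [h, h2] at h1; omega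
  let edge : ∀ (a b : Fin n), a ≠ b → {e : Sym2 (Fin n) // ¬ e.IsDiag} :=
    fun a b h => ⟨Sym2.mk a b, mt Sym2.mk_isDiag_iff.mp h⟩
  have edge_symm : ∀ (a b : Fin n) (h : a ≠ b), edge b a h.symm = edge a b h :=
    fun a b h => Subtype.ext Sym2.eq_swap
  have he0102 : (edge i0 i1 h01) ≠ (edge i0 i2 h02) := by
    intro h
    have h' := congrArg Subtype.val h
    rw [Sym2.eq_iff] at h'
    rcases h' with ⟨-, h'⟩ | ⟨h', -⟩
    · exact h12 h'
    · exact h02 h'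
  have hMle : ∀ s : Fin n ⊕ {e : Sym2 (Fin n) // ¬ e.IsDiag},
      (Sum.elim (fun i => MeasurableSpace.comap (U i) inferInstance)
        (fun e => MeasurableSpace.comap (V e) inferInstance)
        : Fin n ⊕ {e : Sym2 (Fin n) // ¬ e.IsDiag} → MeasurableSpace Ω) s
        ≤ ‹MeasurableSpace Ω› := by
    rintro (i | e)
    · exact (hU i).comap_le
    · exact (hV e).comap_le
  -- grouped independence
  have hIF2 : ∀ (b : Fin n) (e : {e : Sym2 (Fin n) // ¬ e.IsDiag}),
      IndepFun (U b) (V e) P := by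
    intro b e
    refine indepFun_of_comap_le hindep hMle (Sset := {Sum.inl b}) (Tset := {Sum.inr e})
      (by simp) ?_ ?_
    · refine le_biSup (Sum.elim (fun i => MeasurableSpace.comap (U i) inferInstance) (fun e => MeasurableSpace.comap (V e) inferInstance)) (i := Sum.inl b) ?_; simp
    · refine le_biSup (Sum.elim (fun i => MeasurableSpace.comap (U i) inferInstance) (fun e => MeasurableSpace.comap (V e) inferInstance)) (i := Sum.inr e) ?_; simp
  have hIF1 : ∀ (a b : Fin n) (e : {e : Sym2 (Fin n) // ¬ e.IsDiag}), a ≠ b →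
      IndepFun (U a) (fun ω => (U b ω, V e ω)) P := by
    intro a b e hab
    refine indepFun_of_comap_le hindep hMle (Sset := {Sum.inl a})
      (Tset := {Sum.inl b, Sum.inr e}) (by simp [hab]) ?_ ?_
    · refine le_biSup (Sum.elim (fun i => MeasurableSpace.comap (U i) inferInstance) (fun e => MeasurableSpace.comap (V e) inferInstance)) (i := Sum.inl a) ?_; simp
    · refine (comap_prodMk_le (U b) (V e)).trans (sup_le ?_ ?_)
      · refine le_biSup (Sum.elim (fun i => MeasurableSpace.comap (U i) inferInstance) (fun e => MeasurableSpace.comap (V e) inferInstance)) (i := Sum.inl b) ?_; simp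
      · refine le_biSup (Sum.elim (fun i => MeasurableSpace.comap (U i) inferInstance) (fun e => MeasurableSpace.comap (V e) inferInstance)) (i := Sum.inr e) ?_; simp
  have hIF3 : IndepFun (fun ω => (U i1 ω, V (edge i0 i1 h01) ω)) (fun ω => (U i2 ω, V (edge i0 i2 h02) ω)) P := by
    refine indepFun_of_comap_le hindep hMle (Sset := {Sum.inl i1, Sum.inr (edge i0 i1 h01)})
      (Tset := {Sum.inl i2, Sum.inr (edge i0 i2 h02)}) (by simp [Set.disjoint_left, h12, he0102]) ?_ ?_
    · refine (comap_prodMk_le (U i1) (V (edge i0 i1 h01))).trans (sup_le ?_ ?_)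
      · refine le_biSup (Sum.elim (fun i => MeasurableSpace.comap (U i) inferInstance) (fun e => MeasurableSpace.comap (V e) inferInstance)) (i := Sum.inl i1) ?_; simp
      · refine le_biSup (Sum.elim (fun i => MeasurableSpace.comap (U i) inferInstance) (fun e => MeasurableSpace.comap (V e) inferInstance)) (i := Sum.inr (edge i0 i1 h01)) ?_; simp
    · refine (comap_prodMk_le (U i2) (V (edge i0 i2 h02))).trans (sup_le ?_ ?_)
      · refine le_biSup (Sum.elim (fun i => MeasurableSpace.comap (U i) inferInstance) (fun e => MeasurableSpace.comap (V e) inferInstance)) (i := Sum.inl i2) ?_; simp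
      · refine le_biSup (Sum.elim (fun i => MeasurableSpace.comap (U i) inferInstance) (fun e => MeasurableSpace.comap (V e) inferInstance)) (i := Sum.inr (edge i0 i2 h02)) ?_; simp
  have hIF4 : IndepFun (U i0)
      (fun ω => ((U i1 ω, V (edge i0 i1 h01) ω), (U i2 ω, V (edge i0 i2 h02) ω))) P := by
    refine indepFun_of_comap_le hindep hMle (Sset := {Sum.inl i0})
      (Tset := {Sum.inl i1, Sum.inl i2, Sum.inr (edge i0 i1 h01), Sum.inr (edge i0 i2 h02)})
      (by simp [h01, h02]) ?_ ?_
    · refine le_biSup (Sum.elim (fun i => MeasurableSpace.comap (U i) inferInstance) (fun e => MeasurableSpace.comap (V e) inferInstance)) (i := Sum.inl i0) ?_; simp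
    · refine (comap_prodMk_le _ _).trans (sup_le ?_ ?_)
      · refine (comap_prodMk_le (U i1) (V (edge i0 i1 h01))).trans (sup_le ?_ ?_)
        · refine le_biSup (Sum.elim (fun i => MeasurableSpace.comap (U i) inferInstance) (fun e => MeasurableSpace.comap (V e) inferInstance)) (i := Sum.inl i1) ?_; simp
        · refine le_biSup (Sum.elim (fun i => MeasurableSpace.comap (U i) inferInstance) (fun e => MeasurableSpace.comap (V e) inferInstance)) (i := Sum.inr (edge i0 i1 h01)) ?_; simp
      · refine (comap_prodMk_le (U i2) (V (edge i0 i2 h02))).trans (sup_le ?_ ?_)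
        · refine le_biSup (Sum.elim (fun i => MeasurableSpace.comap (U i) inferInstance) (fun e => MeasurableSpace.comap (V e) inferInstance)) (i := Sum.inl i2) ?_; simp
        · refine le_biSup (Sum.elim (fun i => MeasurableSpace.comap (U i) inferInstance) (fun e => MeasurableSpace.comap (V e) inferInstance)) (i := Sum.inr (edge i0 i2 h02)) ?_; simp
  -- the laws
  set μ := P.map (U i0) with hmu
  set ν := P.map (V (edge i0 i1 h01)) with hnu
  haveI : IsProbabilityMeasure μ := Measure.isProbabilityMeasure_map (hU i0).aemeasurable
  haveI : IsProbabilityMeasure ν := Measure.isProbabilityMeasure_map (hV (edge i0 i1 h01)).aemeasurable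
  have hUmap : ∀ a, P.map (U a) = μ := fun a => (hUid a i0).map_eq
  have hVmap : ∀ e, P.map (V e) = ν := fun e => (hVid e (edge i0 i1 h01)).map_eq
  have map_pair : ∀ (b : Fin n) (e : {e : Sym2 (Fin n) // ¬ e.IsDiag}),
      P.map (fun ω => (U b ω, V e ω)) = μ.prod ν := by
    intro b e
    rw [(indepFun_iff_map_prod_eq_prod_map_map (hU b).aemeasurable
      (hV e).aemeasurable).mp (hIF2 b e), hUmap b, hVmap e]
  have L1 : ∀ (a b : Fin n) (e : {e : Sym2 (Fin n) // ¬ e.IsDiag}), a ≠ b →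
      P.map (fun ω => (U a ω, (U b ω, V e ω))) = μ.prod (μ.prod ν) := by
    intro a b e hab
    rw [(indepFun_iff_map_prod_eq_prod_map_map (hU a).aemeasurable
      ((hU b).prodMk (hV e)).aemeasurable).mp (hIF1 a b e hab), hUmap a, map_pair b e]
  have ML : P.map (fun ω => (U i0 ω, ((U i1 ω, V (edge i0 i1 h01) ω), (U i2 ω, V (edge i0 i2 h02) ω))))
      = μ.prod ((μ.prod ν).prod (μ.prod ν)) := by
    rw [(indepFun_iff_map_prod_eq_prod_map_map (hU i0).aemeasurable
      (((hU i1).prodMk (hV (edge i0 i1 h01))).prodMk ((hU i2).prodMk (hV (edge i0 i2 h02)))).aemeasurable).mp hIF4,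
      hUmap i0]
    congr 1
    rw [(indepFun_iff_map_prod_eq_prod_map_map ((hU i1).prodMk (hV (edge i0 i1 h01))).aemeasurable
      ((hU i2).prodMk (hV (edge i0 i2 h02))).aemeasurable).mp hIF3, map_pair i1 (edge i0 i1 h01), map_pair i2 (edge i0 i2 h02)]
  -- the kernel functions
  set h1' : S × S × T → ℝ := fun q => τ q.1 q.2.1 q.2.2 with hh1
  set h2' : S × S × T → ℝ := fun q => τ q.2.1 q.1 q.2.2 with hh2
  have hmeas1 : Measurable h1' := hτ
  have hmeas2 : Measurable h2' :=
    hτ.comp ((measurable_snd.fst).prodMk (measurable_fst.prodMk measurable_snd.snd))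
  -- expressing Z through the kernels
  have hZ1 : ∀ (a b : Fin n) (hab : a ≠ b),
      Z a b = fun ω => h1' (U a ω, (U b ω, V (edge a b hab) ω)) := fun a b hab => hZ a b hab
  have hZ2 : ∀ (a b : Fin n) (hab : a ≠ b),
      Z b a = fun ω => h2' (U a ω, (U b ω, V (edge a b hab) ω)) := by
    intro a b hab
    rw [hZ b a hab.symm]
    have he : (⟨Sym2.mk b a, mt Sym2.mk_isDiag_iff.mp hab.symm⟩ :
        {e : Sym2 (Fin n) // ¬ e.IsDiag}) = edge a b hab := Subtype.ext Sym2.eq_swap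
    rw [he]
  -- L² transfers
  have memZ01 : MemLp (Z i0 i1) 2 P := hL2
  have memh1 : MemLp h1' 2 (μ.prod (μ.prod ν)) := by
    rw [← L1 i0 i1 (edge i0 i1 h01) h01]
    refine (memLp_map_measure_iff hmeas1.aestronglyMeasurable
      ((hU i0).prodMk ((hU i1).prodMk (hV (edge i0 i1 h01)))).aemeasurable).mpr ?_
    show MemLp (fun ω => h1' (U i0 ω, (U i1 ω, V (edge i0 i1 h01) ω))) 2 P
    rw [← hZ1 i0 i1 h01]
    exact hL2
  have memZ : ∀ (a b : Fin n) (hab : a ≠ b), MemLp (Z a b) 2 P := by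
    intro a b hab
    rw [hZ1 a b hab]
    have := (memLp_map_measure_iff hmeas1.aestronglyMeasurable
      ((hU a).prodMk ((hU b).prodMk (hV (edge a b hab)))).aemeasurable).mp
      (by rw [L1 a b (edge a b hab) hab]; exact memh1)
    exact this
  have memh2 : MemLp h2' 2 (μ.prod (μ.prod ν)) := by
    rw [← L1 i0 i1 (edge i0 i1 h01) h01]
    refine (memLp_map_measure_iff hmeas2.aestronglyMeasurable
      ((hU i0).prodMk ((hU i1).prodMk (hV (edge i0 i1 h01)))).aemeasurable).mpr ?_
    show MemLp (fun ω => h2' (U i0 ω, (U i1 ω, V (edge i0 i1 h01) ω))) 2 P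
    rw [← hZ2 i0 i1 h01]
    exact memZ i1 i0 h01.symm
  -- the projection kernels
  set g1 : S → ℝ := fun u => ∫ p, h1' (u, p) ∂(μ.prod ν) with hg1
  set g2 : S → ℝ := fun u => ∫ p, h2' (u, p) ∂(μ.prod ν) with hg2
  have hg1sm : StronglyMeasurable g1 := hmeas1.stronglyMeasurable.integral_prod_right'
  have hg2sm : StronglyMeasurable g2 := hmeas2.stronglyMeasurable.integral_prod_right'
  -- conditional expectations
  have hCE1 : ∀ (l j : Fin n) (h : l ≠ j),
      P[Z l j | MeasurableSpace.comap (U l) inferInstance] =ᵐ[P] fun ω => g1 (U l ω) := by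
    intro l j h
    have hint : Integrable (fun ω => h1' (U l ω, (U j ω, V (edge l j h) ω))) P := by
      rw [← hZ1 l j h]; exact (memZ l j h).integrable one_le_two
    have hce := condexp_indepFun_integral (P := P) (hU l) ((hU j).prodMk (hV (edge l j h)))
      (hIF1 l j (edge l j h) h) h1' hmeas1 hint
    rw [map_pair j (edge l j h)] at hce
    rw [hZ1 l j h]
    exact hce
  have hCE2 : ∀ (l j : Fin n) (h : l ≠ j),
      P[Z j l | MeasurableSpace.comap (U l) inferInstance] =ᵐ[P] fun ω => g2 (U l ω) := by
    intro l j h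
    have hint : Integrable (fun ω => h2' (U l ω, (U j ω, V (edge l j h) ω))) P := by
      rw [← hZ2 l j h]; exact (memZ j l h.symm).integrable one_le_two
    have hce := condexp_indepFun_integral (P := P) (hU l) ((hU j).prodMk (hV (edge l j h)))
      (hIF1 l j (edge l j h) h) h2' hmeas2 hint
    rw [map_pair j (edge l j h)] at hce
    rw [hZ2 l j h]
    exact hce
  -- identification of the Hájek terms
  have hWae : ∀ l : Fin n, W l =ᵐ[P] fun ω => ((n : ℝ) - 1) * (g1 (U l ω) + g2 (U l ω)) := by
    intro l
    have hae1 : ∀ᵐ ω ∂P, ∀ j ∈ Finset.univ.erase l,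
        (P[Z l j | MeasurableSpace.comap (U l) inferInstance]) ω = g1 (U l ω) := by
      rw [Filter.eventually_all_finset]
      intro j hj
      exact hCE1 l j (Finset.ne_of_mem_erase hj).symm
    have hae2 : ∀ᵐ ω ∂P, ∀ j ∈ Finset.univ.erase l,
        (P[Z j l | MeasurableSpace.comap (U l) inferInstance]) ω = g2 (U l ω) := by
      rw [Filter.eventually_all_finset]
      intro j hj
      exact hCE2 l j (Finset.ne_of_mem_erase hj).symm
    rw [hW l]
    filter_upwards [hae1, hae2] with ω H1 H2
    rw [Finset.sum_congr rfl H1, Finset.sum_congr rfl H2, Finset.sum_const, Finset.sum_const,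
      Finset.card_erase_of_mem (Finset.mem_univ l), Finset.card_univ, Fintype.card_fin,
      nsmul_eq_mul, nsmul_eq_mul, Nat.cast_sub (by omega), Nat.cast_one]
    ring
  -- big joint law objects
  have hbigJ : Measurable (fun ω => (U i0 ω,
      ((U i1 ω, V (edge i0 i1 h01) ω), (U i2 ω, V (edge i0 i2 h02) ω)))) :=
    (hU i0).prodMk (((hU i1).prodMk (hV _)).prodMk ((hU i2).prodMk (hV _)))
  have hm11 : Measurable (fun z : S × ((S × T) × (S × T)) => h1' (z.1, z.2.1)) :=
    hmeas1.comp (measurable_fst.prodMk (measurable_snd.fst))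
  have hm12 : Measurable (fun z : S × ((S × T) × (S × T)) => h1' (z.1, z.2.2)) :=
    hmeas1.comp (measurable_fst.prodMk (measurable_snd.snd))
  have hm21 : Measurable (fun z : S × ((S × T) × (S × T)) => h2' (z.1, z.2.1)) :=
    hmeas2.comp (measurable_fst.prodMk (measurable_snd.fst))
  have hm22 : Measurable (fun z : S × ((S × T) × (S × T)) => h2' (z.1, z.2.2)) :=
    hmeas2.comp (measurable_fst.prodMk (measurable_snd.snd))
  have MemF1p : MemLp (fun z : S × ((S × T) × (S × T)) => h1' (z.1, z.2.1)) 2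
      (μ.prod ((μ.prod ν).prod (μ.prod ν))) := by
    rw [← ML]
    refine (memLp_map_measure_iff hm11.aestronglyMeasurable hbigJ.aemeasurable).mpr ?_
    show MemLp (fun ω => h1' (U i0 ω, (U i1 ω, V (edge i0 i1 h01) ω))) 2 P
    rw [← hZ1 i0 i1 h01]; exact memZ i0 i1 h01
  have MemF1q : MemLp (fun z : S × ((S × T) × (S × T)) => h1' (z.1, z.2.2)) 2
      (μ.prod ((μ.prod ν).prod (μ.prod ν))) := by
    rw [← ML]
    refine (memLp_map_measure_iff hm12.aestronglyMeasurable hbigJ.aemeasurable).mpr ?_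
    show MemLp (fun ω => h1' (U i0 ω, (U i2 ω, V (edge i0 i2 h02) ω))) 2 P
    rw [← hZ1 i0 i2 h02]; exact memZ i0 i2 h02
  have MemF2p : MemLp (fun z : S × ((S × T) × (S × T)) => h2' (z.1, z.2.1)) 2
      (μ.prod ((μ.prod ν).prod (μ.prod ν))) := by
    rw [← ML]
    refine (memLp_map_measure_iff hm21.aestronglyMeasurable hbigJ.aemeasurable).mpr ?_
    show MemLp (fun ω => h2' (U i0 ω, (U i1 ω, V (edge i0 i1 h01) ω))) 2 P
    rw [← hZ2 i0 i1 h01]; exact memZ i1 i0 h01.symm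
  have MemF2q : MemLp (fun z : S × ((S × T) × (S × T)) => h2' (z.1, z.2.2)) 2
      (μ.prod ((μ.prod ν).prod (μ.prod ν))) := by
    rw [← ML]
    refine (memLp_map_measure_iff hm22.aestronglyMeasurable hbigJ.aemeasurable).mpr ?_
    show MemLp (fun ω => h2' (U i0 ω, (U i2 ω, V (edge i0 i2 h02) ω))) 2 P
    rw [← hZ2 i0 i2 h02]; exact memZ i2 i0 h02.symm
  -- a generic reduction for the three product integrals
  have key_int : ∀ (F G : S × S × T → ℝ), Measurable F → Measurable G →
      MemLp (fun z : S × ((S × T) × (S × T)) => F (z.1, z.2.1)) 2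
        (μ.prod ((μ.prod ν).prod (μ.prod ν))) →
      MemLp (fun z : S × ((S × T) × (S × T)) => G (z.1, z.2.2)) 2
        (μ.prod ((μ.prod ν).prod (μ.prod ν))) →
      ∫ ω, F (U i0 ω, (U i1 ω, V (edge i0 i1 h01) ω))
          * G (U i0 ω, (U i2 ω, V (edge i0 i2 h02) ω)) ∂P
        = ∫ u, (∫ p, F (u, p) ∂(μ.prod ν)) * (∫ p, G (u, p) ∂(μ.prod ν)) ∂μ := by
    intro F G hF hG hmF hmG
    have hFG : Integrable (fun z : S × ((S × T) × (S × T)) => F (z.1, z.2.1) * G (z.1, z.2.2))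
        (μ.prod ((μ.prod ν).prod (μ.prod ν))) := integrable_mul_of_memL2 hmF hmG
    have hFGm : Measurable (fun z : S × ((S × T) × (S × T)) => F (z.1, z.2.1) * G (z.1, z.2.2)) :=
      (hF.comp (measurable_fst.prodMk (measurable_snd.fst))).mul
        (hG.comp (measurable_fst.prodMk (measurable_snd.snd)))
    calc ∫ ω, F (U i0 ω, (U i1 ω, V (edge i0 i1 h01) ω))
            * G (U i0 ω, (U i2 ω, V (edge i0 i2 h02) ω)) ∂P
        = ∫ z : S × ((S × T) × (S × T)), F (z.1, z.2.1) * G (z.1, z.2.2)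
            ∂(P.map (fun ω => (U i0 ω,
              ((U i1 ω, V (edge i0 i1 h01) ω), (U i2 ω, V (edge i0 i2 h02) ω))))) :=
          (integral_map hbigJ.aemeasurable hFGm.aestronglyMeasurable).symm
      _ = ∫ z : S × ((S × T) × (S × T)), F (z.1, z.2.1) * G (z.1, z.2.2)
            ∂(μ.prod ((μ.prod ν).prod (μ.prod ν))) := by rw [ML]
      _ = ∫ u, (∫ pq : (S × T) × (S × T), F (u, pq.1) * G (u, pq.2)
            ∂((μ.prod ν).prod (μ.prod ν))) ∂μ := integral_prod _ hFG
      _ = ∫ u, (∫ p, F (u, p) ∂(μ.prod ν)) * (∫ p, G (u, p) ∂(μ.prod ν)) ∂μ := by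
          refine integral_congr_ae (Filter.Eventually.of_forall fun u => ?_)
          exact integral_prod_mul (fun p => F (u, p)) (fun q => G (u, q))
  -- the three product integrals
  have I1 : ∫ ω, Z i0 i1 ω * Z i0 i2 ω ∂P = ∫ u, g1 u * g1 u ∂μ := by
    rw [hZ1 i0 i1 h01, hZ1 i0 i2 h02]
    exact key_int h1' h1' hmeas1 hmeas1 MemF1p MemF1q
  have I2 : ∫ ω, Z i1 i0 ω * Z i2 i0 ω ∂P = ∫ u, g2 u * g2 u ∂μ := by
    rw [hZ2 i0 i1 h01, hZ2 i0 i2 h02]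
    exact key_int h2' h2' hmeas2 hmeas2 MemF2p MemF2q
  have I3 : ∫ ω, Z i0 i1 ω * Z i2 i0 ω ∂P = ∫ u, g1 u * g2 u ∂μ := by
    rw [hZ1 i0 i1 h01, hZ2 i0 i2 h02]
    exact key_int h1' h2' hmeas1 hmeas2 MemF1p MemF2q
  -- integrability of products of the projection kernels
  have Intg11 : Integrable (fun u => g1 u * g1 u) μ := by
    refine (integrable_mul_of_memL2 MemF1p MemF1q).integral_prod_left.congr
      (Filter.Eventually.of_forall fun u => ?_)
    exact integral_prod_mul (fun p => h1' (u, p)) (fun q => h1' (u, q))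
  have Intg22 : Integrable (fun u => g2 u * g2 u) μ := by
    refine (integrable_mul_of_memL2 MemF2p MemF2q).integral_prod_left.congr
      (Filter.Eventually.of_forall fun u => ?_)
    exact integral_prod_mul (fun p => h2' (u, p)) (fun q => h2' (u, q))
  have Intg12 : Integrable (fun u => g1 u * g2 u) μ := by
    refine (integrable_mul_of_memL2 MemF1p MemF2q).integral_prod_left.congr
      (Filter.Eventually.of_forall fun u => ?_)
    exact integral_prod_mul (fun p => h1' (u, p)) (fun q => h2' (u, q))
  have Memg1 : MemLp g1 2 μ := by
    refine (memLp_two_iff_integrable_sq hg1sm.aestronglyMeasurable).mpr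
      (Intg11.congr (Filter.Eventually.of_forall fun u => ?_))
    exact (pow_two (g1 u)).symm
  have Memg2 : MemLp g2 2 μ := by
    refine (memLp_two_iff_integrable_sq hg2sm.aestronglyMeasurable).mpr
      (Intg22.congr (Filter.Eventually.of_forall fun u => ?_))
    exact (pow_two (g2 u)).symm
  have IntG1 : Integrable g1 μ := (memh1.integrable one_le_two).integral_prod_left
  have IntG2 : Integrable g2 μ := (memh2.integrable one_le_two).integral_prod_left
  -- mean-zero facts
  have hint1 : ∫ z, h1' z ∂(μ.prod (μ.prod ν)) = 0 := by
    rw [← L1 i0 i1 (edge i0 i1 h01) h01,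
      integral_map ((hU i0).prodMk ((hU i1).prodMk (hV _))).aemeasurable
        hmeas1.aestronglyMeasurable, ← hZ1 i0 i1 h01]
    exact hmean
  have hg1zero : ∫ u, g1 u ∂μ = 0 := by
    calc ∫ u, g1 u ∂μ = ∫ z, h1' z ∂(μ.prod (μ.prod ν)) :=
          (integral_prod h1' (memh1.integrable one_le_two)).symm
      _ = 0 := hint1
  have hZ10mean : ∫ ω, Z i1 i0 ω ∂P = 0 := by
    rw [hZ1 i1 i0 h01.symm,
      ← integral_map ((hU i1).prodMk ((hU i0).prodMk (hV _))).aemeasurable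
        hmeas1.aestronglyMeasurable, L1 i1 i0 (edge i1 i0 h01.symm) h01.symm]
    exact hint1
  have hg2zero : ∫ u, g2 u ∂μ = 0 := by
    calc ∫ u, g2 u ∂μ = ∫ z, h2' z ∂(μ.prod (μ.prod ν)) :=
          (integral_prod h2' (memh2.integrable one_le_two)).symm
      _ = ∫ ω, Z i1 i0 ω ∂P := by
          rw [← L1 i0 i1 (edge i0 i1 h01) h01,
            integral_map ((hU i0).prodMk ((hU i1).prodMk (hV _))).aemeasurable
              hmeas2.aestronglyMeasurable, ← hZ2 i0 i1 h01]
      _ = 0 := hZ10mean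
  -- Part 1 : independence of the W's
  have hWm : ∀ l : Fin n, Measurable[MeasurableSpace.comap (U l) inferInstance] (W l) := by
    intro l
    rw [hW l]
    exact Measurable.add
      (Finset.measurable_sum _ fun j _ => (stronglyMeasurable_condExp).measurable)
      (Finset.measurable_sum _ fun j _ => (stronglyMeasurable_condExp).measurable)
  have indepW : iIndepFun W P := by
    rw [iIndepFun_iff_iIndep]
    exact iIndep_comp_of_le' hindep Sum.inl (fun a b h => Sum.inl.inj h) _
      (fun l => measurable_iff_comap_le.mp (hWm l))
  have hWmeas : ∀ l, Measurable (W l) := fun l => (hWm l).mono ((hU l).comap_le) le_rfl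
  -- L² membership of the W's
  have Memg1U : ∀ l, MemLp (fun ω => g1 (U l ω)) 2 P := by
    intro l
    have h : MemLp g1 2 (P.map (U l)) := by rw [hUmap l]; exact Memg1
    exact (memLp_map_measure_iff hg1sm.aestronglyMeasurable (hU l).aemeasurable).mp h
  have Memg2U : ∀ l, MemLp (fun ω => g2 (U l ω)) 2 P := by
    intro l
    have h : MemLp g2 2 (P.map (U l)) := by rw [hUmap l]; exact Memg2
    exact (memLp_map_measure_iff hg2sm.aestronglyMeasurable (hU l).aemeasurable).mp h
  have MemWl : ∀ l, MemLp (W l) 2 P := by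
    intro l
    exact MemLp.ae_eq (hWae l).symm (((Memg1U l).add (Memg2U l)).const_mul ((n : ℝ) - 1))
  -- variance of each W l
  have varW : ∀ l : Fin n, variance (W l) P
      = ((n : ℝ) - 1) ^ 2 * ∫ u, (g1 u + g2 u) ^ 2 ∂μ := by
    intro l
    rw [variance_eq_sub (MemWl l)]
    have hXint : ∫ ω, W l ω ∂P = 0 := by
      rw [integral_congr_ae (hWae l), integral_const_mul]
      have h : ∫ ω, (g1 (U l ω) + g2 (U l ω)) ∂P = ∫ u, (g1 u + g2 u) ∂μ := by
        rw [← hUmap l]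
        exact (integral_map (hU l).aemeasurable ((hg1sm.add hg2sm).aestronglyMeasurable)).symm
      rw [h, integral_add IntG1 IntG2, hg1zero, hg2zero]
      ring
    have hXsq : ∫ ω, (W l ^ 2) ω ∂P = ((n : ℝ) - 1) ^ 2 * ∫ u, (g1 u + g2 u) ^ 2 ∂μ := by
      have hae : (W l ^ 2 : Ω → ℝ) =ᵐ[P]
          fun ω => ((n : ℝ) - 1) ^ 2 * (g1 (U l ω) + g2 (U l ω)) ^ 2 :=
        (hWae l).mono fun ω h => by simp only [Pi.pow_apply, h]; ring
      rw [integral_congr_ae hae, integral_const_mul]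
      congr 1
      rw [← hUmap l]
      exact (integral_map (hU l).aemeasurable
        (((hg1sm.measurable.add hg2sm.measurable).pow_const 2).aestronglyMeasurable)).symm
    rw [hXsq, hXint]
    ring
  -- expansion of the square
  have Bexp : ∫ u, (g1 u + g2 u) ^ 2 ∂μ
      = (∫ u, g1 u * g1 u ∂μ) + (∫ u, g2 u * g2 u ∂μ) + 2 * ∫ u, g1 u * g2 u ∂μ := by
    have h : ∀ u, (g1 u + g2 u) ^ 2 = (g1 u * g1 u + g2 u * g2 u) + 2 * (g1 u * g2 u) :=
      fun u => by ring
    simp_rw [h]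
    have IntA : Integrable (fun u => g1 u * g1 u + g2 u * g2 u) μ := Intg11.add Intg22
    have IntB : Integrable (fun u => 2 * (g1 u * g2 u)) μ := Intg12.const_mul 2
    have IntC : Integrable (fun u => g1 u * g1 u) μ := Intg11
    rw [integral_add IntA IntB, integral_add IntC Intg22, integral_const_mul]
  -- conditional-expectation integrals
  have I4 : ∫ ω, ((P[Z i0 i1 | MeasurableSpace.comap (U i0) inferInstance]) ω) ^ 2 ∂P
      = ∫ u, g1 u * g1 u ∂μ := by
    have hae : (fun ω => ((P[Z i0 i1 | MeasurableSpace.comap (U i0) inferInstance]) ω) ^ 2)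
        =ᵐ[P] fun ω => g1 (U i0 ω) * g1 (U i0 ω) :=
      (hCE1 i0 i1 h01).mono fun ω h => by dsimp only; rw [h]; ring
    rw [integral_congr_ae hae]
    exact (integral_map (hU i0).aemeasurable
      ((hg1sm.mul hg1sm).aestronglyMeasurable)).symm
  have I5 : ∫ ω, ((P[Z i1 i0 | MeasurableSpace.comap (U i0) inferInstance]) ω) ^ 2 ∂P
      = ∫ u, g2 u * g2 u ∂μ := by
    have hae : (fun ω => ((P[Z i1 i0 | MeasurableSpace.comap (U i0) inferInstance]) ω) ^ 2)
        =ᵐ[P] fun ω => g2 (U i0 ω) * g2 (U i0 ω) :=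
      (hCE2 i0 i1 h01).mono fun ω h => by dsimp only; rw [h]; ring
    rw [integral_congr_ae hae]
    exact (integral_map (hU i0).aemeasurable
      ((hg2sm.mul hg2sm).aestronglyMeasurable)).symm
  have I6 : ∫ ω, (P[Z i0 i1 | MeasurableSpace.comap (U i0) inferInstance]) ω *
      (P[Z i1 i0 | MeasurableSpace.comap (U i0) inferInstance]) ω ∂P
      = ∫ u, g1 u * g2 u ∂μ := by
    have hae : (fun ω => (P[Z i0 i1 | MeasurableSpace.comap (U i0) inferInstance]) ω *
        (P[Z i1 i0 | MeasurableSpace.comap (U i0) inferInstance]) ω)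
        =ᵐ[P] fun ω => g1 (U i0 ω) * g2 (U i0 ω) := by
      filter_upwards [hCE1 i0 i1 h01, hCE2 i0 i1 h01] with ω ha hb
      rw [ha, hb]
    rw [integral_congr_ae hae]
    exact (integral_map (hU i0).aemeasurable
      ((hg1sm.mul hg2sm).aestronglyMeasurable)).symm
  -- final assembly
  refine ⟨indepW, ?_⟩
  have hsum_eq : (fun ω => ∑ l : Fin n, W l ω) = ∑ l : Fin n, W l := by
    funext ω; rw [Finset.sum_apply]
  rw [hsum_eq, IndepFun.variance_sum (fun l _ => MemWl l)
    (fun a _ b _ hab => indepW.indepFun hab)]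
  rw [Finset.sum_congr rfl (fun l _ => varW l), Finset.sum_const, Finset.card_univ,
    Fintype.card_fin, nsmul_eq_mul]
  rw [I1, I2, I3, I4, I5, I6, Bexp]
  ring
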